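/- Let k and r be positive integers with r ≥ 2, k ≤ r and r+k even. Let G be a graph with chromatic number at most r, P ⊆ V(G), and d : P → {1,...,r+k} a proper coloring of G[P]. If |D_G(P,2)| < 2(r+k−1), then d can be extended to a proper coloring of G using at most (3r+k)/2 colors. -/

import Mathlib

open Finset Equiv

private lemma conj_card {n : ℕ} (FFI : Finset (Perm (Fin n)))
    (hFFI : ∀ σ : Perm (Fin n), σ ∈ FFI ↔ ((∀ x, σ (σ x) = x) ∧ (∀ x, σ x ≠ x)))
    {a b a' b' : Fin n} (hab : a ≠ b) (hab' : a' ≠ b') :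
    (FFI.filter (fun σ => σ a = b)).card = (FFI.filter (fun σ => σ a' = b')).card := by
  classical
  set c : Fin n := Equiv.swap a a' b with hc
  have hca' : c ≠ a' := by
    intro h
    have : Equiv.swap a a' b = Equiv.swap a a' a := by
      rw [Equiv.swap_apply_left]; exact h
    exact hab ((Equiv.swap a a').injective this).symm
  set τ : Perm (Fin n) := (Equiv.swap c b') * (Equiv.swap a a') with hτ
  have hτa : τ a = a' := by
    simp only [hτ, Perm.mul_apply, Equiv.swap_apply_left]
    exact Equiv.swap_apply_of_ne_of_ne hca'.symm hab'
  have hτb : τ b = b' := by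
    simp only [hτ, Perm.mul_apply, ← hc, Equiv.swap_apply_left]
  have key : ∀ σ : Perm (Fin n), σ ∈ FFI ∧ σ a = b →
      (τ * σ * τ⁻¹) ∈ FFI ∧ (τ * σ * τ⁻¹) a' = b' := by
    intro σ ⟨hσ, hσa⟩
    rw [hFFI] at hσ
    refine ⟨(hFFI _).2 ⟨?_, ?_⟩, ?_⟩
    · intro x; simp [Perm.mul_apply, hσ.1]
    · intro x hx
      have : σ (τ⁻¹ x) = τ⁻¹ x := by
        have := congrArg (fun z => τ⁻¹ z) hx
        simpa [Perm.mul_apply] using this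
      exact hσ.2 _ this
    · have hai : τ⁻¹ a' = a := by rw [← hτa]; simp
      simp [Perm.mul_apply, hai, hσa, hτb]
  have key' : ∀ σ : Perm (Fin n), σ ∈ FFI ∧ σ a' = b' →
      (τ⁻¹ * σ * τ) ∈ FFI ∧ (τ⁻¹ * σ * τ) a = b := by
    intro σ ⟨hσ, hσa⟩
    rw [hFFI] at hσ
    refine ⟨(hFFI _).2 ⟨?_, ?_⟩, ?_⟩
    · intro x; simp [Perm.mul_apply, hσ.1]
    · intro x hx
      have : σ (τ x) = τ x := by
        have := congrArg (fun z => τ z) hx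
        simpa [Perm.mul_apply] using this
      exact hσ.2 _ this
    · simp [Perm.mul_apply, hτa, hσa, ← hτb]
  refine Finset.card_bij' (fun σ _ => τ * σ * τ⁻¹) (fun σ _ => τ⁻¹ * σ * τ) ?_ ?_ ?_ ?_
  · intro σ hσ
    simp only [mem_filter] at hσ ⊢
    exact ⟨((key σ ⟨hσ.1, hσ.2⟩).1), (key σ ⟨hσ.1, hσ.2⟩).2⟩
  · intro σ hσ
    simp only [mem_filter] at hσ ⊢
    exact ⟨((key' σ ⟨hσ.1, hσ.2⟩).1), (key' σ ⟨hσ.1, hσ.2⟩).2⟩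
  · intro σ _; group
  · intro σ _; group

private lemma cheap_inv {n : ℕ} (h2 : 2 ≤ n) (hn : Even n)
    (cost : Fin n → Fin n → ℕ) (hsym : ∀ x y, cost x y = cost y x)
    (hB : ∑ x, ∑ y, (if x < y then cost x y else 0) ≤ 2 * n - 3) :
    ∃ σ : Equiv.Perm (Fin n), (∀ x, σ (σ x) = x) ∧ (∀ x, σ x ≠ x) ∧
      (∑ x, if x < σ x then cost x (σ x) else 0) ≤ 1 := by
  classical
  set costU : Fin n → Fin n → ℕ := fun x y => if x < y then cost x y else 0 with hcostU
  by_contra hcon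
  push_neg at hcon
  set FFI : Finset (Perm (Fin n)) :=
    univ.filter (fun σ => (∀ x, σ (σ x) = x) ∧ (∀ x, σ x ≠ x)) with hFFIdef
  have memFFI : ∀ σ : Perm (Fin n), σ ∈ FFI ↔ ((∀ x, σ (σ x) = x) ∧ (∀ x, σ x ≠ x)) := by
    intro σ; simp [hFFIdef]
  have hrev : (Fin.revPerm : Perm (Fin n)) ∈ FFI := by
    rw [memFFI]
    refine ⟨fun x => Fin.rev_rev x, fun x hx => ?_⟩
    have hv := congrArg Fin.val hx
    have hlt := x.isLt
    simp only [Fin.revPerm_apply, Fin.val_rev] at hv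
    obtain ⟨m, hm⟩ := hn
    omega
  have hFne : FFI.Nonempty := ⟨_, hrev⟩
  -- decompose cost
  have hdecomp : ∀ x y : Fin n, x ≠ y → cost x y = costU x y + costU y x := by
    intro x y hxy
    rcases lt_trichotomy x y with h | h | h
    · simp [hcostU, h, not_lt.2 h.le]
    · exact absurd h hxy
    · simp [hcostU, h, not_lt.2 h.le, hsym x y]
  -- for σ ∈ FFI, the diagonal sum is twice the upper sum
  have hΦ : ∀ σ ∈ FFI, (∑ x, cost x (σ x)) = 2 * ∑ x, costU x (σ x) := by
    intro σ hσ
    rw [memFFI] at hσ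
    have h1 : (∑ x, cost x (σ x)) = ∑ x, (costU x (σ x) + costU (σ x) x) := by
      refine Finset.sum_congr rfl fun x _ => hdecomp x (σ x) (fun h => hσ.2 x h.symm)
    rw [h1, Finset.sum_add_distrib]
    have h2 : (∑ x, costU (σ x) x) = ∑ x, costU x (σ x) := by
      have := Equiv.sum_comp σ (fun z => costU z (σ z))
      calc (∑ x, costU (σ x) x) = ∑ x, costU (σ x) (σ (σ x)) := by
            refine Finset.sum_congr rfl fun x _ => by rw [hσ.1]
        _ = ∑ z, costU z (σ z) := this
    omega
  -- lower bound
  have hlow : 4 * FFI.card ≤ ∑ σ ∈ FFI, ∑ x, cost x (σ x) := by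
    calc 4 * FFI.card = ∑ _σ ∈ FFI, 4 := by rw [Finset.sum_const]; ring
      _ ≤ ∑ σ ∈ FFI, ∑ x, cost x (σ x) := by
          refine Finset.sum_le_sum fun σ hσ => ?_
          rw [hΦ σ hσ]
          have h3 : 1 < ∑ x, costU x (σ x) := hcon σ ((memFFI σ).1 hσ).1 ((memFFI σ).1 hσ).2
          omega
  -- fiberwise计算
  set J : Fin n → Fin n → ℕ := fun x y => (FFI.filter (fun σ => σ x = y)).card with hJ
  have hmaps : ∀ x : Fin n, ∀ σ ∈ FFI, σ x ∈ univ.erase x := by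
    intro x σ hσ
    simp [Finset.mem_erase, ((memFFI σ).1 hσ).2 x]
  have hfiber : ∀ x : Fin n, (∑ σ ∈ FFI, cost x (σ x)) = ∑ y ∈ univ.erase x, J x y * cost x y := by
    intro x
    rw [← Finset.sum_fiberwise_of_maps_to (hmaps x) (fun σ => cost x (σ x))]
    refine Finset.sum_congr rfl fun y _ => ?_
    have : ∀ σ ∈ FFI.filter (fun σ => σ x = y), cost x (σ x) = cost x y := by
      intro σ hσ; rw [(Finset.mem_filter.1 hσ).2]
    rw [Finset.sum_congr rfl this, Finset.sum_const, smul_eq_mul, hJ]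
  -- J constant
  have hn1 : (1:ℕ) < n := by omega
  set a0 : Fin n := ⟨0, by omega⟩ with ha0
  set b0 : Fin n := ⟨1, by omega⟩ with hb0
  have hab0 : a0 ≠ b0 := by simp [ha0, hb0, Fin.ext_iff]
  set J0 : ℕ := J a0 b0 with hJ0
  have hJconst : ∀ x y : Fin n, x ≠ y → J x y = J0 := by
    intro x y hxy
    exact conj_card FFI memFFI hxy hab0
  have hcard : FFI.card = (n - 1) * J0 := by
    have h1 : FFI.card = ∑ σ ∈ FFI, 1 := by simp
    rw [h1, ← Finset.sum_fiberwise_of_maps_to (hmaps a0) (fun _ => 1)]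
    have h2 : ∀ y ∈ univ.erase a0, (∑ _σ ∈ FFI.filter (fun σ => σ a0 = y), 1) = J0 := by
      intro y hy
      rw [Finset.sum_const, smul_eq_mul, mul_one, ← hJconst a0 y (Finset.ne_of_mem_erase hy).symm]
    rw [Finset.sum_congr rfl h2, Finset.sum_const, smul_eq_mul, Finset.card_erase_of_mem (Finset.mem_univ a0), Finset.card_univ, Fintype.card_fin]
  have hB' : (∑ x, ∑ y, costU x y) ≤ 2 * n - 3 := hB
  have hupper : (∑ σ ∈ FFI, ∑ x, cost x (σ x)) ≤ J0 * (2 * (2 * n - 3)) := by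
    rw [Finset.sum_comm]
    have h3 : ∀ x : Fin n, (∑ σ ∈ FFI, cost x (σ x)) = J0 * ∑ y ∈ univ.erase x, cost x y := by
      intro x
      rw [hfiber x, Finset.mul_sum]
      refine Finset.sum_congr rfl fun y hy => ?_
      rw [hJconst x y (Finset.ne_of_mem_erase hy).symm]
    rw [Finset.sum_congr rfl (fun x _ => h3 x), ← Finset.mul_sum]
    refine Nat.mul_le_mul_left J0 ?_
    have h4 : ∀ x : Fin n, (∑ y ∈ univ.erase x, cost x y)
        = (∑ y, costU x y) + (∑ y, costU y x) := by
      intro x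
      have h5 : ∀ y ∈ univ.erase x, cost x y = costU x y + costU y x := by
        intro y hy
        exact hdecomp x y (Finset.ne_of_mem_erase hy).symm
      rw [Finset.sum_congr rfl h5, Finset.sum_add_distrib]
      congr 1
      · exact Finset.sum_erase _ (by simp [hcostU])
      · exact Finset.sum_erase _ (by simp [hcostU])
    rw [Finset.sum_congr rfl (fun x _ => h4 x), Finset.sum_add_distrib]
    have h6 : (∑ x : Fin n, ∑ y : Fin n, costU y x) = ∑ x : Fin n, ∑ y : Fin n, costU x y :=
      Finset.sum_comm
    omega
  have hJ0pos : 1 ≤ J0 := by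
    have := Finset.card_pos.2 hFne
    rw [hcard] at this
    by_contra h
    interval_cases J0 <;> omega
  have hfin : 4 * ((n - 1) * J0) ≤ J0 * (2 * (2 * n - 3)) := by
    rw [← hcard]
    exact le_trans hlow hupper
  have : 4 * (n - 1) ≤ 2 * (2 * n - 3) := by
    have h7 : (4 * (n - 1)) * J0 ≤ (2 * (2 * n - 3)) * J0 := by ring_nf; ring_nf at hfin; omega
    exact Nat.le_of_mul_le_mul_right h7 hJ0pos
  omega

/-- The set of unordered pairs of distinct vertices of `P` at distance at most `m` in `G`. -/
def pairsAtMost {V : Type*} (G : SimpleGraph V) (P : Set V) (m : ℕ) : Set (Sym2 V) :=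
  {e | ∃ x y, e = s(x, y) ∧ x ∈ P ∧ y ∈ P ∧ x ≠ y ∧ ∃ p : G.Walk x y, p.length ≤ m}

/-- r+k even, k ≤ r, |D_G(P,2)| < 2(r+k-1): any (r+k)-precoloring of P
extends to a coloring of G with at most (3r+k)/2 colors (colors c with 2c ≤ 3r+k). -/
theorem stmt_16 {V : Type*} [Fintype V] (k r : ℕ) (hk : 1 ≤ k) (hr : 2 ≤ r)
    (hkr : k ≤ r) (heven : Even (r + k))
    (G : SimpleGraph V) (hχ : G.chromaticNumber ≤ r) (P : Set V)
    (d : V → ℕ) (hd : ∀ x ∈ P, ∀ y ∈ P, G.Adj x y → d x ≠ d y)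
    (hdr : ∀ x ∈ P, d x ∈ Finset.Icc 1 (r + k))
    (hD : (pairsAtMost G P 2).ncard < 2 * (r + k - 1)) :
    ∃ f : V → ℕ, (∀ u v, G.Adj u v → f u ≠ f v) ∧
      (∀ v, 1 ≤ f v ∧ 2 * f v ≤ 3 * r + k) ∧ ∀ x ∈ P, f x = d x := by
  classical
  set n := r + k with hn
  have hn4 : 4 ≤ n := by obtain ⟨m, hm⟩ := heven; omega
  obtain ⟨c⟩ : G.Colorable r := SimpleGraph.chromaticNumber_le_iff_colorable.1 hχ
  set ι : Fin n → ℕ := fun x => (x : ℕ) + 1 with hι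
  have hιinj : ∀ x y : Fin n, ι x = ι y → x = y := by
    intro x y h; simp [hι] at h; exact Fin.ext h
  set Su : V → Set ℕ := fun u => {m | ∃ w ∈ P, G.Adj u w ∧ d w = m} with hSu
  have hSurange : ∀ u, ∀ m ∈ Su u, 1 ≤ m ∧ m ≤ n := by
    intro u m hm
    obtain ⟨w, hw, _, hdw⟩ := hm
    have := hdr w hw
    rw [Finset.mem_Icc] at this
    omega
  set Restr : Fin n → Fin n → Prop := fun x y => ∃ u, u ∉ P ∧ ι x ∈ Su u ∧ ι y ∈ Su u
    with hRestr
  set Dead : Fin n → Fin n → Prop :=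
    fun x y => ∀ i : Fin r, ∃ u, u ∉ P ∧ c u = i ∧ ι x ∈ Su u ∧ ι y ∈ Su u with hDead
  have hDR : ∀ x y, Dead x y → Restr x y := by
    intro x y h
    obtain ⟨u, hu, _, hx, hy⟩ := h ⟨0, by omega⟩
    exact ⟨u, hu, hx, hy⟩
  set cost : Fin n → Fin n → ℕ :=
    fun x y => (if Restr x y then 1 else 0) + (if Dead x y then 1 else 0) with hcost
  have hsym : ∀ x y, cost x y = cost y x := by
    intro x y
    have h1 : Restr x y ↔ Restr y x := by
      constructor <;> (rintro ⟨u, hu, h1, h2⟩; exact ⟨u, hu, h2, h1⟩)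
    have h2 : Dead x y ↔ Dead y x := by
      constructor <;>
        (intro h i; obtain ⟨u, hu, hc, ha, hb⟩ := h i; exact ⟨u, hu, hc, hb, ha⟩)
    simp only [hcost, h1, h2]
  -- the witness sets
  have hDfinite : (pairsAtMost G P 2).Finite := Set.toFinite _
  set Dfin : Finset (Sym2 V) := hDfinite.toFinset with hDfin
  set Wit : Fin n → Fin n → Finset (Sym2 V) :=
    fun x y => Dfin.filter (fun e => ∃ a b, e = s(a, b) ∧ d a = ι x ∧ d b = ι y) with hWit
  -- construction of witnesses
  have hmkwit : ∀ (x y : Fin n), x ≠ y → ∀ u, u ∉ P → ι x ∈ Su u → ι y ∈ Su u →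
      ∃ a b : V, a ∈ P ∧ b ∈ P ∧ G.Adj u a ∧ G.Adj u b ∧ d a = ι x ∧ d b = ι y ∧
        s(a, b) ∈ Wit x y := by
    intro x y hxy u hu hx hy
    obtain ⟨a, haP, hadj, hda⟩ := hx
    obtain ⟨b, hbP, hbdj, hdb⟩ := hy
    have hab : a ≠ b := by
      intro h; apply hxy; apply hιinj; rw [← hda, ← hdb, h]
    refine ⟨a, b, haP, hbP, hadj, hbdj, hda, hdb, ?_⟩
    rw [hWit, Finset.mem_filter]
    constructor
    · rw [hDfin, Set.Finite.mem_toFinset]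
      refine ⟨a, b, rfl, haP, hbP, hab, ?_⟩
      refine ⟨SimpleGraph.Walk.cons (G.adj_symm hadj) (SimpleGraph.Walk.cons hbdj SimpleGraph.Walk.nil), ?_⟩
      simp
    · exact ⟨a, b, rfl, hda, hdb⟩
  have hcostcard : ∀ x y : Fin n, x < y → cost x y ≤ (Wit x y).card := by
    intro x y hxy
    by_cases hres : Restr x y
    · obtain ⟨u, hu, hx, hy⟩ := id hres
      obtain ⟨a, b, haP, hbP, hadj, hbdj, hda, hdb, hmem⟩ :=
        hmkwit x y (ne_of_lt hxy) u hu hx hy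
      by_cases hdead : Dead x y
      · -- two witnesses
        obtain ⟨u2, hu2, hcu2, hx2, hy2⟩ := hdead (c a)
        obtain ⟨a2, b2, ha2P, hb2P, hadj2, hbdj2, hda2, hdb2, hmem2⟩ :=
          hmkwit x y (ne_of_lt hxy) u2 hu2 hx2 hy2
        have hane : a2 ≠ a := by
          intro h
          have := c.valid hadj2
          rw [h, hcu2] at this
          exact this rfl
        have hne : s(a2, b2) ≠ s(a, b) := by
          simp only [ne_eq, Sym2.eq_iff]
          push_neg
          constructor
          · intro h; exact absurd h hane
          · intro h
            exfalso
            apply ne_of_lt hxy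
            apply hιinj
            rw [← hda2, h, hdb]
        have : 1 < (Wit x y).card := Finset.one_lt_card.2 ⟨_, hmem2, _, hmem, hne⟩
        have e : cost x y = (if Restr x y then 1 else 0) + (if Dead x y then 1 else 0) := rfl
        have e1 : (if Restr x y then 1 else 0) ≤ 1 := by split <;> omega
        have e2 : (if Dead x y then 1 else 0) ≤ 1 := by split <;> omega
        omega
      · have h1 : 0 < (Wit x y).card := Finset.card_pos.2 ⟨_, hmem⟩
        have e : cost x y = (if Restr x y then 1 else 0) + (if Dead x y then 1 else 0) := rfl
        have e1 : (if Restr x y then 1 else 0) ≤ 1 := by split <;> omega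
        have e2 : (if Dead x y then 1 else 0) = 0 := by rw [if_neg hdead]
        omega
    · have : ¬ Dead x y := fun h => hres (hDR x y h)
      have e : cost x y = (if Restr x y then 1 else 0) + (if Dead x y then 1 else 0) := rfl
      rw [e, if_neg hres, if_neg this]
      omega
  -- disjointness
  have hwitdisj : ∀ p ∈ univ.filter (fun p : Fin n × Fin n => p.1 < p.2),
      ∀ q ∈ univ.filter (fun p : Fin n × Fin n => p.1 < p.2), p ≠ q →
      Disjoint (Wit p.1 p.2) (Wit q.1 q.2) := by
    rintro ⟨x, y⟩ hp ⟨x', y'⟩ hq hne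
    simp only [Finset.mem_filter, Finset.mem_univ, true_and] at hp hq
    rw [Finset.disjoint_left]
    intro e he he'
    rw [hWit, Finset.mem_filter] at he he'
    obtain ⟨-, a, b, rfl, hda, hdb⟩ := he
    obtain ⟨-, a', b', heq, hda', hdb'⟩ := he'
    rw [Sym2.eq_iff] at heq
    apply hne
    rcases heq with ⟨h1, h2⟩ | ⟨h1, h2⟩
    · have hx : x = x' := hιinj _ _ (by rw [← hda, ← hda', h1])
      have hy : y = y' := hιinj _ _ (by rw [← hdb, ← hdb', h2])
      simp [hx, hy]
    · exfalso
      have hx : x = y' := hιinj _ _ (by rw [← hda, ← hdb', h1])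
      have hy : y = x' := hιinj _ _ (by rw [← hdb, ← hda', h2])
      rw [hx, hy] at hp
      exact absurd (hp.trans hq) (lt_irrefl _)
  -- the budget
  have hB : (∑ x : Fin n, ∑ y : Fin n, if x < y then cost x y else 0) ≤ 2 * n - 3 := by
    have step1 : (∑ x : Fin n, ∑ y : Fin n, if x < y then cost x y else 0)
        ≤ ∑ x : Fin n, ∑ y : Fin n, if x < y then (Wit x y).card else 0 := by
      refine Finset.sum_le_sum fun x _ => Finset.sum_le_sum fun y _ => ?_
      by_cases h : x < y
      · simp only [if_pos h]; exact hcostcard x y h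
      · simp [h]
    have step2 : (∑ x : Fin n, ∑ y : Fin n, if x < y then (Wit x y).card else 0)
        = ∑ p ∈ univ.filter (fun p : Fin n × Fin n => p.1 < p.2), (Wit p.1 p.2).card := by
      rw [Finset.sum_filter, ← Finset.univ_product_univ, Finset.sum_product]
    have step3 : (∑ p ∈ univ.filter (fun p : Fin n × Fin n => p.1 < p.2), (Wit p.1 p.2).card)
        ≤ Dfin.card := by
      rw [← Finset.card_biUnion hwitdisj]
      refine Finset.card_le_card ?_
      intro e he
      rw [Finset.mem_biUnion] at he
      obtain ⟨p, -, hp⟩ := he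
      rw [hWit, Finset.mem_filter] at hp
      exact hp.1
    have step4 : Dfin.card ≤ 2 * n - 3 := by
      have := Set.ncard_eq_toFinset_card _ hDfinite
      rw [← hDfin] at this
      rw [← this]
      omega
    omega
  obtain ⟨σ, hinv, hff, hcheap⟩ := cheap_inv (by omega) (by rwa [hn] at heven ⊢) cost hsym hB
  -- the set of representatives
  set R : Finset (Fin n) := univ.filter (fun x => x < σ x) with hRdef
  set Rc : Finset (Fin n) := univ.filter (fun x => σ x < x) with hRcdef
  have hRRc : R.card = Rc.card := by
    refine Finset.card_bij (fun x _ => σ x) ?_ ?_ ?_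
    · intro x hx
      rw [hRdef, Finset.mem_filter] at hx
      rw [hRcdef, Finset.mem_filter]
      exact ⟨Finset.mem_univ _, by rw [hinv x]; exact hx.2⟩
    · intro x _ y _ h
      exact σ.injective h
    · intro y hy
      rw [hRcdef, Finset.mem_filter] at hy
      refine ⟨σ y, ?_, hinv y⟩
      rw [hRdef, Finset.mem_filter]
      exact ⟨Finset.mem_univ _, by rw [hinv y]; exact hy.2⟩
  have h2R : 2 * R.card = n := by
    have hdisj2 : Disjoint R Rc := by
      rw [Finset.disjoint_left]
      intro x hx hx'
      rw [hRdef, Finset.mem_filter] at hx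
      rw [hRcdef, Finset.mem_filter] at hx'
      exact absurd (hx.2.trans hx'.2) (lt_irrefl _)
    have huniv : R ∪ Rc = univ := by
      ext x
      simp only [Finset.mem_union, hRdef, hRcdef, Finset.mem_filter, Finset.mem_univ,
        true_and, iff_true]
      rcases lt_trichotomy x (σ x) with h | h | h
      · exact Or.inl h
      · exact absurd h.symm (hff x)
      · exact Or.inr h
    have hcu := Finset.card_union_of_disjoint hdisj2
    rw [huniv, Finset.card_univ, Fintype.card_fin] at hcu
    omega
  have hRne : R.Nonempty := by
    rw [← Finset.card_pos]; omega
  -- facts from cheapness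
  have hsingle : ∀ x ∈ R, cost x (σ x) ≤ 1 := by
    intro x hx
    rw [hRdef, Finset.mem_filter] at hx
    calc cost x (σ x) = if x < σ x then cost x (σ x) else 0 := by rw [if_pos hx.2]
      _ ≤ ∑ z, if z < σ z then cost z (σ z) else 0 :=
          Finset.single_le_sum (f := fun z => if z < σ z then cost z (σ z) else 0)
            (fun z _ => Nat.zero_le _) (Finset.mem_univ x)
      _ ≤ 1 := hcheap
  have hpair : ∀ x ∈ R, ∀ y ∈ R, x ≠ y → cost x (σ x) = 0 ∨ cost y (σ y) = 0 := by
    intro x hx y hy hne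
    by_contra hcon2
    push_neg at hcon2
    have hx2 := (Finset.mem_filter.1 (hRdef ▸ hx)).2
    have hy2 := (Finset.mem_filter.1 (hRdef ▸ hy)).2
    have hsub : ({x, y} : Finset (Fin n)) ⊆ univ := Finset.subset_univ _
    have h1 : (∑ z ∈ ({x, y} : Finset (Fin n)), if z < σ z then cost z (σ z) else 0)
        ≤ ∑ z, if z < σ z then cost z (σ z) else 0 :=
      Finset.sum_le_sum_of_subset hsub
    rw [Finset.sum_pair hne, if_pos hx2, if_pos hy2] at h1
    have := hcheap
    omega
  have hrescost : ∀ x y : Fin n, Restr x y → 1 ≤ cost x y := by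
    intro x y h
    have e : cost x y = (if Restr x y then 1 else 0) + (if Dead x y then 1 else 0) := rfl
    rw [e, if_pos h]
    omega
  -- the special pair and class
  set x0 : Fin n := if h : ∃ x ∈ R, Restr x (σ x) then h.choose else R.min' hRne with hx0def
  have hx0R : x0 ∈ R := by
    rw [hx0def]
    split
    · next h => exact h.choose_spec.1
    · exact R.min'_mem hRne
  have hother : ∀ x ∈ R, x ≠ x0 → ¬ Restr x (σ x) := by
    intro x hx hne hres
    by_cases h : ∃ x ∈ R, Restr x (σ x)
    · have hx0r : Restr x0 (σ x0) := by
        rw [hx0def]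
        simp only [dif_pos h]
        exact h.choose_spec.2
      have hx0eq : x0 = if h' : ∃ x ∈ R, Restr x (σ x) then h'.choose else R.min' hRne := hx0def
      rcases hpair x hx x0 hx0R hne with h0 | h0
      · exact absurd h0 (by have := hrescost x (σ x) hres; omega)
      · exact absurd h0 (by have := hrescost x0 (σ x0) hx0r; omega)
    · exact h ⟨x, hx, hres⟩
  have hx0notdead : ¬ Dead x0 (σ x0) := by
    intro hdead
    have e : cost x0 (σ x0) = (if Restr x0 (σ x0) then 1 else 0)
        + (if Dead x0 (σ x0) then 1 else 0) := rfl
    have h1 := hsingle x0 hx0R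
    rw [e, if_pos (hDR _ _ hdead), if_pos hdead] at h1
    omega
  have hx0i : ∃ i : Fin r, ∀ u, u ∉ P → c u = i → ι x0 ∈ Su u → ι (σ x0) ∈ Su u → False := by
    by_contra hcon2
    push_neg at hcon2
    apply hx0notdead
    intro i
    obtain ⟨u, h1, h2, h3, h4⟩ := hcon2 i
    exact ⟨u, h1, h2, h3, h4.1⟩
  obtain ⟨i0, hi0⟩ := hx0i
  -- the injection ψ from R into classes, sending x0 to i0
  set R' : Finset (Fin n) := R.erase x0 with hR'def
  have hcardR' : R'.card + 1 = R.card := Finset.card_erase_add_one hx0R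
  have hle2 : R'.card ≤ ((univ : Finset (Fin r)).erase i0).card := by
    rw [Finset.card_erase_of_mem (Finset.mem_univ i0), Finset.card_univ, Fintype.card_fin]
    omega
  obtain ⟨t', ht'sub, ht'card⟩ := Finset.exists_subset_card_eq hle2
  have heqc : R'.card = t'.card := ht'card.symm
  set eqv : {x // x ∈ R'} ≃ {x // x ∈ t'} := Finset.equivOfCardEq heqc with heqv
  set ψ : Fin n → Fin r := fun x => if h : x ∈ R' then (eqv ⟨x, h⟩ : {y // y ∈ t'}).1 else i0
    with hψdef
  have hψx0 : ψ x0 = i0 := by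
    rw [hψdef]
    simp only [dif_neg (show x0 ∉ R' from Finset.notMem_erase x0 R)]
  have hψt' : ∀ x ∈ R', ψ x ∈ t' := by
    intro x hx
    rw [hψdef]
    simp only [dif_pos hx]
    exact (eqv ⟨x, hx⟩).2
  have hψnoti0 : ∀ x ∈ R', ψ x ≠ i0 := by
    intro x hx h
    exact (Finset.mem_erase.1 (ht'sub (hψt' x hx))).1 h
  have hmemR' : ∀ x ∈ R, x ≠ x0 → x ∈ R' := by
    intro x hx hne
    rw [hR'def, Finset.mem_erase]
    exact ⟨hne, hx⟩
  have hψinj : ∀ x ∈ R, ∀ y ∈ R, ψ x = ψ y → x = y := by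
    intro x hx y hy h
    by_cases hxe : x = x0 <;> by_cases hye : y = x0
    · rw [hxe, hye]
    · exfalso
      apply hψnoti0 y (hmemR' y hy hye)
      rw [← h, hxe, hψx0]
    · exfalso
      apply hψnoti0 x (hmemR' x hx hxe)
      rw [h, hye, hψx0]
    · have hx' := hmemR' x hx hxe
      have hy' := hmemR' y hy hye
      rw [hψdef] at h
      simp only [dif_pos hx', dif_pos hy'] at h
      have := eqv.injective (Subtype.ext h)
      exact congrArg Subtype.val this
  -- matched classes and representatives
  set matched : Fin r → Prop := fun i => ∃ x ∈ R, ψ x = i with hmatcheddef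
  set rep : Fin r → Fin n := fun i => if h : matched i then h.choose else x0 with hrepdef
  have hrep : ∀ i, matched i → rep i ∈ R ∧ ψ (rep i) = i := by
    intro i h
    rw [hrepdef]
    simp only [dif_pos h]
    exact ⟨h.choose_spec.1, h.choose_spec.2⟩
  -- unmatched classes
  set Cim : Finset (Fin r) := R.image ψ with hCimdef
  have hmatched_iff : ∀ i, matched i ↔ i ∈ Cim := by
    intro i
    rw [hmatcheddef, hCimdef]
    simp only [Finset.mem_image]
  set Cc : Finset (Fin r) := univ \ Cim with hCcdef
  have hCimcard : Cim.card = R.card :=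
    Finset.card_image_of_injOn (fun x hx y hy => hψinj x hx y hy)
  have hCccard : Cc.card = r - R.card := by
    rw [hCcdef, Finset.card_sdiff_of_subset (Finset.subset_univ _), Finset.card_univ, Fintype.card_fin,
      hCimcard]
  set η : Fin r → ℕ := fun i => n + 1 + (Cc.filter (fun j => j < i)).card with hηdef
  have hηlb : ∀ i, n + 1 ≤ η i := by
    intro i
    exact Nat.le_add_right _ _
  have hηmono : ∀ i ∈ Cc, ∀ j ∈ Cc, i < j → η i < η j := by
    intro i hi j hj hij
    have hss : Cc.filter (fun l => l < i) ⊂ Cc.filter (fun l => l < j) := by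
      constructor
      · intro l hl
        rw [Finset.mem_filter] at hl ⊢
        exact ⟨hl.1, hl.2.trans hij⟩
      · intro hsub
        have : i ∈ Cc.filter (fun l => l < i) := hsub (Finset.mem_filter.2 ⟨hi, hij⟩)
        exact absurd (Finset.mem_filter.1 this).2 (lt_irrefl i)
    have := Finset.card_lt_card hss
    rw [hηdef]
    simp only []
    omega
  have hηinj : ∀ i ∈ Cc, ∀ j ∈ Cc, η i = η j → i = j := by
    intro i hi j hj h
    rcases lt_trichotomy i j with hlt | heq | hlt
    · exact absurd h (Nat.ne_of_lt (hηmono i hi j hj hlt))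
    · exact heq
    · exact absurd h.symm (Nat.ne_of_lt (hηmono j hj i hi hlt))
  have hηub : ∀ i ∈ Cc, η i ≤ n + (r - R.card) := by
    intro i hi
    have hsub : Cc.filter (fun l => l < i) ⊆ Cc.erase i := by
      intro l hl
      rw [Finset.mem_erase]
      exact ⟨ne_of_lt (Finset.mem_filter.1 hl).2, (Finset.mem_filter.1 hl).1⟩
    have h1 := Finset.card_le_card hsub
    have h2 : (Cc.erase i).card + 1 = Cc.card := Finset.card_erase_add_one hi
    rw [hηdef]
    simp only []
    omega
  -- the palette
  set Pal : Fin r → ℕ × ℕ := fun i =>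
    if matched i then (ι (rep i), ι (σ (rep i))) else (η i, η i) with hPaldef
  -- the coloring
  set f : V → ℕ := fun v => if v ∈ P then d v else
    (if (Pal (c v)).1 ∈ Su v then (Pal (c v)).2 else (Pal (c v)).1) with hfdef
  have hfP : ∀ v ∈ P, f v = d v := by
    intro v hv
    rw [hfdef]
    simp only [if_pos hv]
  have hfnotP : ∀ v, v ∉ P → (f v = (Pal (c v)).1 ∨ f v = (Pal (c v)).2) := by
    intro v hv
    rw [hfdef]
    simp only [if_neg hv]
    split
    · exact Or.inr rfl
    · exact Or.inl rfl
  -- key fact: off P, f avoids the neighboring precolors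
  have hfSu : ∀ u, u ∉ P → f u ∉ Su u := by
    intro u hu
    rw [hfdef]
    simp only [if_neg hu]
    by_cases hm : matched (c u)
    · obtain ⟨hxR, hxψ⟩ := hrep _ hm
      have hPal1 : Pal (c u) = (ι (rep (c u)), ι (σ (rep (c u)))) := by
        rw [hPaldef]
        simp only [if_pos hm]
      rw [hPal1]
      by_cases h1 : ι (rep (c u)) ∈ Su u
      · simp only [if_pos h1]
        intro h2
        have hres : Restr (rep (c u)) (σ (rep (c u))) := ⟨u, hu, h1, h2⟩
        have hxx0 : rep (c u) = x0 := by
          by_contra hne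
          exact hother _ hxR hne hres
        apply hi0 u hu
        · rw [← hxψ, hxx0, hψx0]
        · rw [← hxx0]; exact h1
        · rw [← hxx0]; exact h2
      · simp only [if_neg h1]
        exact h1
    · have hPal1 : Pal (c u) = (η (c u), η (c u)) := by
        rw [hPaldef]
        simp only [if_neg hm]
      rw [hPal1]
      have hnot : η (c u) ∉ Su u := by
        intro h
        have := (hSurange u _ h).2
        have := hηlb (c u)
        omega
      split
      · exact hnot
      · exact hnot
  -- palette values are small for matched, large for unmatched
  have hιub : ∀ z : Fin n, ι z ≤ n := by
    intro z
    exact z.isLt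
  -- distinctness of palettes
  have hdgen : ∀ a ∈ R, ∀ b ∈ R, a ≠ b → a ≠ σ b := by
    intro a ha b hb hne h
    have ha2 := (Finset.mem_filter.1 (hRdef ▸ ha)).2
    have hb2 := (Finset.mem_filter.1 (hRdef ▸ hb)).2
    have e2 : σ a = b := by rw [h, hinv]
    have l2 : σ b < b := by
      calc σ b = a := h.symm
        _ < σ a := ha2
        _ = b := e2
    exact absurd (hb2.trans l2) (lt_irrefl _)
  have hkey : ∀ i j : Fin r, i ≠ j → ∀ p q : ℕ,
      (p = (Pal i).1 ∨ p = (Pal i).2) → (q = (Pal j).1 ∨ q = (Pal j).2) → p ≠ q := by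
    intro i j hij p q hp hq
    by_cases hmi : matched i <;> by_cases hmj : matched j
    · obtain ⟨hxR, hxψ⟩ := hrep i hmi
      obtain ⟨hyR, hyψ⟩ := hrep j hmj
      have hxy : rep i ≠ rep j := fun h => hij (by rw [← hxψ, ← hyψ, h])
      have hPal1 : Pal i = (ι (rep i), ι (σ (rep i))) := by
        rw [hPaldef]; simp only [if_pos hmi]
      have hPal2 : Pal j = (ι (rep j), ι (σ (rep j))) := by
        rw [hPaldef]; simp only [if_pos hmj]
      rw [hPal1] at hp
      rw [hPal2] at hq
      have d1 : rep i ≠ σ (rep j) := hdgen _ hxR _ hyR hxy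
      have d2 : σ (rep i) ≠ rep j := fun h => hdgen _ hyR _ hxR hxy.symm h.symm
      have d3 : σ (rep i) ≠ σ (rep j) := fun h => hxy (σ.injective h)
      rcases hp with rfl | rfl <;> rcases hq with rfl | rfl <;> intro h
      · exact hxy (hιinj _ _ h)
      · exact d1 (hιinj _ _ h)
      · exact d2 (hιinj _ _ h)
      · exact d3 (hιinj _ _ h)
    · have hPal2 : Pal j = (η j, η j) := by
        rw [hPaldef]; simp only [if_neg hmj]
      have hPal1 : Pal i = (ι (rep i), ι (σ (rep i))) := by
        rw [hPaldef]; simp only [if_pos hmi]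
      rw [hPal1] at hp
      rw [hPal2] at hq
      have hub : p ≤ n := by rcases hp with rfl | rfl <;> exact hιub _
      have hlb : n + 1 ≤ q := by rcases hq with rfl | rfl <;> exact hηlb _
      omega
    · have hPal1 : Pal i = (η i, η i) := by
        rw [hPaldef]; simp only [if_neg hmi]
      have hPal2 : Pal j = (ι (rep j), ι (σ (rep j))) := by
        rw [hPaldef]; simp only [if_pos hmj]
      rw [hPal1] at hp
      rw [hPal2] at hq
      have hub : q ≤ n := by rcases hq with rfl | rfl <;> exact hιub _
      have hlb : n + 1 ≤ p := by rcases hp with rfl | rfl <;> exact hηlb _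
      omega
    · have hPal1 : Pal i = (η i, η i) := by
        rw [hPaldef]; simp only [if_neg hmi]
      have hPal2 : Pal j = (η j, η j) := by
        rw [hPaldef]; simp only [if_neg hmj]
      rw [hPal1] at hp
      rw [hPal2] at hq
      have hiC : i ∈ Cc := by
        rw [hCcdef, Finset.mem_sdiff]
        exact ⟨Finset.mem_univ _, fun h => hmi ((hmatched_iff i).2 h)⟩
      have hjC : j ∈ Cc := by
        rw [hCcdef, Finset.mem_sdiff]
        exact ⟨Finset.mem_univ _, fun h => hmj ((hmatched_iff j).2 h)⟩
      rcases hp with rfl | rfl <;> rcases hq with rfl | rfl <;>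
        exact fun h => hij (hηinj i hiC j hjC h)
  -- conclusion
  refine ⟨f, ?_, ?_, fun x hx => hfP x hx⟩
  · intro u v hadj
    by_cases hu : u ∈ P <;> by_cases hv : v ∈ P
    · rw [hfP u hu, hfP v hv]
      exact hd u hu v hv hadj
    · intro h
      apply hfSu v hv
      rw [← h, hfP u hu]
      exact ⟨u, hu, G.adj_symm hadj, rfl⟩
    · intro h
      apply hfSu u hu
      rw [h, hfP v hv]
      exact ⟨v, hv, hadj, rfl⟩
    · exact hkey _ _ (c.valid hadj) _ _ (hfnotP u hu) (hfnotP v hv)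
  · intro v
    by_cases hv : v ∈ P
    · rw [hfP v hv]
      have := hdr v hv
      rw [Finset.mem_Icc] at this
      omega
    · rcases hfnotP v hv with h | h <;> (
        by_cases hm : matched (c v))
      · have hPal1 : Pal (c v) = (ι (rep (c v)), ι (σ (rep (c v)))) := by
          rw [hPaldef]; simp only [if_pos hm]
        rw [h, hPal1]
        refine ⟨Nat.le_add_left 1 _, ?_⟩
        show 2 * ι (rep (c v)) ≤ 3 * r + k
        have h1 := hιub (rep (c v))
        omega
      · have hPal1 : Pal (c v) = (η (c v), η (c v)) := by
          rw [hPaldef]; simp only [if_neg hm]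
        have hiC : c v ∈ Cc := by
          rw [hCcdef, Finset.mem_sdiff]
          exact ⟨Finset.mem_univ _, fun hh => hm ((hmatched_iff (c v)).2 hh)⟩
        rw [h, hPal1]
        have h1 := hηub _ hiC
        have h2 := hηlb (c v)
        refine ⟨?_, ?_⟩
        · show 1 ≤ η (c v)
          omega
        · show 2 * η (c v) ≤ 3 * r + k
          omega
      · have hPal1 : Pal (c v) = (ι (rep (c v)), ι (σ (rep (c v)))) := by
          rw [hPaldef]; simp only [if_pos hm]
        rw [h, hPal1]
        refine ⟨Nat.le_add_left 1 _, ?_⟩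
        show 2 * ι (σ (rep (c v))) ≤ 3 * r + k
        have h1 := hιub (σ (rep (c v)))
        omega
      · have hPal1 : Pal (c v) = (η (c v), η (c v)) := by
          rw [hPaldef]; simp only [if_neg hm]
        have hiC : c v ∈ Cc := by
          rw [hCcdef, Finset.mem_sdiff]
          exact ⟨Finset.mem_univ _, fun hh => hm ((hmatched_iff (c v)).2 hh)⟩
        rw [h, hPal1]
        have h1 := hηub _ hiC
        have h2 := hηlb (c v)
        refine ⟨?_, ?_⟩
        · show 1 ≤ η (c v)
          omega
        · show 2 * η (c v) ≤ 3 * r + k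
          omega
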